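/- For real a > 0 and u, s ∈ ℂ with Re(s) > |Re(u)|, the Mellin transform of the K-Bessel function satisfies ∫_0^∞ K_u(a y) y^s dy/y = 2^{s−2} a^{−s} Γ((s+u)/2) Γ((s−u)/2). -/

import Mathlib

open MeasureTheory

section KBesselAuxSection
open Set

namespace KBesselAux

lemma half_re {p : ℂ} (hp : 0 < p.re) : 0 < (p / 2).re := by
  rw [show (2:ℂ) = ((2:ℝ):ℂ) by norm_num, Complex.div_ofReal_re]
  positivity

lemma sq_cpow {x : ℝ} (hx : 0 < x) (w : ℂ) : ((x ^ 2 : ℝ) : ℂ) ^ w = (x : ℂ) ^ (2 * w) := by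
  have hx2 : (0 : ℝ) < x ^ 2 := by positivity
  rw [Complex.cpow_def_of_ne_zero (by exact_mod_cast hx2.ne'),
    Complex.cpow_def_of_ne_zero (by exact_mod_cast hx.ne'),
    ← Complex.ofReal_log hx2.le, ← Complex.ofReal_log hx.le, Real.log_pow]
  congr 1
  push_cast
  ring

lemma gauss_cpow {c : ℝ} (hc : 0 < c) {p : ℂ} (hp : 0 < p.re) :
    ∫ y in Ioi (0 : ℝ), (Real.exp (-(c * y ^ 2)) : ℂ) * (y : ℂ) ^ (p - 1)
      = (1 / 2 : ℂ) * (1 / (c : ℂ)) ^ (p / 2) * Complex.Gamma (p / 2) := by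
  have key := integral_comp_rpow_Ioi_of_pos
    (g := fun w : ℝ => ((w : ℂ)) ^ (p / 2 - 1) * Complex.exp (-(c * w))) (two_pos (α := ℝ))
  rw [Complex.integral_cpow_mul_exp_neg_mul_Ioi (half_re hp) hc] at key
  have key2 : (2:ℂ) * ∫ y in Ioi (0 : ℝ), (Real.exp (-(c * y ^ 2)) : ℂ) * (y : ℂ) ^ (p - 1)
      = (1 / (c:ℂ)) ^ (p / 2) * Complex.Gamma (p / 2) := by
    rw [← key, ← MeasureTheory.integral_const_mul]
    refine (setIntegral_congr_fun measurableSet_Ioi (fun x hx => ?_)).symm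
    have hx : (0:ℝ) < x := hx
    have hx0 : (x : ℂ) ≠ 0 := by exact_mod_cast hx.ne'
    rw [Real.rpow_two, show ((2:ℝ) - 1) = (1:ℝ) by norm_num, Real.rpow_one,
      Complex.real_smul]
    rw [sq_cpow hx]
    push_cast
    rw [show (2 : ℂ) * (p / 2 - 1) = p - 1 - 1 by ring, Complex.cpow_sub _ _ hx0,
      Complex.cpow_one]
    field_simp
  have h := key2
  field_simp at h ⊢
  linear_combination h

end KBesselAux

namespace KBesselAux

lemma gauss_rpow {c : ℝ} (hc : 0 < c) {p : ℝ} (hp : 0 < p) :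
    ∫ y in Ioi (0 : ℝ), Real.exp (-(c * y ^ 2)) * y ^ (p - 1)
      = (1 / 2 : ℝ) * (1 / c) ^ (p / 2) * Real.Gamma (p / 2) := by
  have h := gauss_cpow hc (p := (p : ℂ)) (by simpa using hp)
  have hL : ((∫ y in Ioi (0:ℝ), Real.exp (-(c * y ^ 2)) * y ^ (p - 1) : ℝ) : ℂ)
      = ∫ y in Ioi (0:ℝ), (Real.exp (-(c * y ^ 2)) : ℂ) * (y : ℂ) ^ ((p:ℂ) - 1) := by
    refine integral_ofReal.symm.trans (setIntegral_congr_fun measurableSet_Ioi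
      (fun x hx => ?_))
    have hx : (0:ℝ) < x := hx
    norm_cast
    simp_rw [← Complex.ofReal_cpow hx.le, RCLike.ofReal_mul, Complex.coe_algebraMap]
  rw [← Complex.ofReal_inj, hL, h, show ((p:ℂ))/2 = (((p/2 : ℝ)):ℂ) by push_cast; ring,
    show (1/(c:ℂ)) = ((1/c : ℝ):ℂ) by push_cast; ring,
    Complex.Gamma_ofReal, ← Complex.ofReal_cpow (by positivity : (0:ℝ) ≤ 1/c)]
  push_cast
  ring

lemma int_gauss {c : ℝ} (hc : 0 < c) {p : ℂ} (hp : 0 < p.re) :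
    IntegrableOn (fun y : ℝ => (Real.exp (-(c * y ^ 2)) : ℂ) * (y : ℂ) ^ (p - 1)) (Ioi 0) := by
  have hreal : IntegrableOn (fun y : ℝ => y ^ (p.re - 1) * Real.exp (-c * y ^ 2)) (Ioi 0) :=
    integrableOn_rpow_mul_exp_neg_mul_sq hc (by linarith)
  refine Integrable.mono' hreal ?_ ?_
  · refine ContinuousOn.aestronglyMeasurable ?_ measurableSet_Ioi
    refine ContinuousOn.mul ?_ ?_
    · exact (Complex.continuous_ofReal.comp
        (Real.continuous_exp.comp (by continuity))).continuousOn
    · refine continuousOn_of_forall_continuousAt (fun x hx => ?_)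
      exact Complex.continuousAt_ofReal_cpow_const x _ (Or.inr (ne_of_gt hx))
  · filter_upwards [ae_restrict_mem measurableSet_Ioi] with y hy
    have hy : (0:ℝ) < y := hy
    rw [norm_mul, Complex.norm_real, Real.norm_eq_abs,
      abs_of_pos (Real.exp_pos _), Complex.norm_cpow_eq_rpow_re_of_pos hy]
    simp only [Complex.sub_re, Complex.one_re]
    rw [neg_mul, mul_comm]

lemma int_exp_rpow {c : ℝ} (hc : 0 < c) {p : ℝ} (hp : 0 < p) :
    IntegrableOn (fun x : ℝ => Real.exp (-(c * x)) * x ^ (p - 1)) (Ioi 0) := by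
  have h0 : IntegrableOn (fun x : ℝ => Real.exp (-x) * x ^ (p - 1)) (Ioi 0) :=
    Real.GammaIntegral_convergent hp
  have h1 : IntegrableOn (fun x : ℝ => Real.exp (-(c * x)) * (c * x) ^ (p - 1)) (Ioi 0) := by
    have := (integrableOn_Ioi_comp_mul_left_iff
      (fun x : ℝ => Real.exp (-x) * x ^ (p - 1)) 0 hc).2 (by simpa using h0)
    simpa using this
  have h2 := h1.const_mul (c ^ (1 - p))
  refine IntegrableOn.congr_fun h2 (fun x hx => ?_) measurableSet_Ioi
  have hx : (0:ℝ) < x := hx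
  rw [Real.mul_rpow hc.le hx.le]
  rw [show c ^ (1-p) * (Real.exp (-(c*x)) * (c ^ (p-1) * x ^ (p-1)))
      = (c ^ (1-p) * c ^ (p-1)) * (Real.exp (-(c*x)) * x ^ (p-1)) by ring,
    ← Real.rpow_add hc]
  norm_num

end KBesselAux

end KBesselAuxSection

open KBesselAux

/-- The K-Bessel function `K_u(y) = (1/2) ∫_0^∞ exp(-y(t+t⁻¹)/2) t^u dt/t`. -/
noncomputable def KBessel (u : ℂ) (y : ℝ) : ℂ :=
  (1 / 2) * ∫ t in Set.Ioi (0 : ℝ), (Real.exp (-(y * (t + t⁻¹) / 2)) : ℂ) * (t : ℂ) ^ (u - 1)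

theorem KBessel_mellin (a : ℝ) (ha : 0 < a) (u s : ℂ) (hs : |u.re| < s.re) :
    ∫ y in Set.Ioi (0 : ℝ), KBessel u (a * y) * (y : ℂ) ^ (s - 1)
      = 2 ^ (s - 2) * (a : ℂ) ^ (-s) * Complex.Gamma ((s + u) / 2)
          * Complex.Gamma ((s - u) / 2) := by
  obtain ⟨hs2', hs1'⟩ := abs_lt.mp hs
  have hs1 : 0 < (s - u).re := by simp only [Complex.sub_re]; linarith
  have hs2 : 0 < (s + u).re := by simp only [Complex.add_re]; linarith
  set F : ℝ → ℝ → ℂ := fun x y =>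
    (Real.exp (-(a * (x + y ^ 2 / x) / 2)) : ℂ) * (x : ℂ) ^ (u - 1) * (y : ℂ) ^ (s - u - 1)
    with hF
  -- pointwise splitting of the exponential, for x > 0
  have hsplit : ∀ x : ℝ, 0 < x → (fun y : ℝ => F x y) = fun y : ℝ =>
      ((Real.exp (-(a * x / 2)) : ℂ) * (x : ℂ) ^ (u - 1)) *
        ((Real.exp (-(a / (2 * x) * y ^ 2)) : ℂ) * (y : ℂ) ^ (s - u - 1)) := by
    intro x hx
    funext y
    simp only [hF]
    rw [show -(a * (x + y ^ 2 / x) / 2) = -(a * x / 2) + -(a / (2 * x) * y ^ 2) by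
      field_simp; ring, Real.exp_add]
    push_cast
    ring
  -- Step 1 : substitution t = x / y in the Bessel integral
  have step1 : ∀ y ∈ Set.Ioi (0:ℝ), KBessel u (a * y) * (y : ℂ) ^ (s - 1)
      = (1/2 : ℂ) * ∫ x in Set.Ioi (0:ℝ), F x y := by
    intro y hy
    have hy : (0:ℝ) < y := hy
    have hy0 : (y:ℂ) ≠ 0 := by exact_mod_cast hy.ne'
    have hyinv : (0:ℝ) < y⁻¹ := inv_pos.2 hy
    have hsub := integral_comp_mul_left_Ioi
      (fun t : ℝ => (Real.exp (-(a * y * (t + t⁻¹) / 2)) : ℂ) * (t : ℂ) ^ (u - 1)) 0 hyinv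
    rw [mul_zero, inv_inv] at hsub
    have hKB : KBessel u (a * y) = (1/2 : ℂ) * (y⁻¹ • ∫ x in Set.Ioi (0:ℝ),
        (Real.exp (-(a * y * (y⁻¹ * x + (y⁻¹ * x)⁻¹) / 2)) : ℂ)
          * ((y⁻¹ * x : ℝ) : ℂ) ^ (u - 1)) := by
      rw [KBessel]
      congr 1
      rw [hsub, smul_smul, inv_mul_cancel₀ hy.ne', one_smul]
    have hI : (∫ x in Set.Ioi (0:ℝ),
        (Real.exp (-(a * y * (y⁻¹ * x + (y⁻¹ * x)⁻¹) / 2)) : ℂ)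
          * ((y⁻¹ * x : ℝ) : ℂ) ^ (u - 1))
        = ((y⁻¹ : ℝ) : ℂ) ^ (u - 1) * ∫ x in Set.Ioi (0:ℝ),
            (Real.exp (-(a * (x + y ^ 2 / x) / 2)) : ℂ) * (x : ℂ) ^ (u - 1) := by
      rw [← MeasureTheory.integral_const_mul]
      refine setIntegral_congr_fun measurableSet_Ioi (fun x hx => ?_)
      have hx : (0:ℝ) < x := hx
      rw [show a * y * (y⁻¹ * x + (y⁻¹ * x)⁻¹) / 2 = a * (x + y ^ 2 / x) / 2 by
        field_simp]
      rw [Complex.ofReal_mul, Complex.mul_cpow_ofReal_nonneg hyinv.le hx.le]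
      ring
    have harg : Complex.arg (y : ℂ) ≠ Real.pi := by
      rw [Complex.arg_ofReal_of_nonneg hy.le]
      exact Ne.symm Real.pi_ne_zero
    have hpow : ((y⁻¹ : ℝ) : ℂ) * ((y⁻¹ : ℝ) : ℂ) ^ (u - 1) * (y : ℂ) ^ (s - 1)
        = (y : ℂ) ^ (s - u - 1) := by
      push_cast
      rw [Complex.inv_cpow _ _ harg, ← Complex.cpow_neg,
        show ((y:ℂ))⁻¹ = (y:ℂ) ^ (-1 : ℂ) by rw [Complex.cpow_neg_one],
        ← Complex.cpow_add _ _ hy0, ← Complex.cpow_add _ _ hy0]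
      congr 1
      ring
    rw [hKB, hI, Complex.real_smul]
    have hR : (∫ x in Set.Ioi (0:ℝ), F x y)
        = (∫ x in Set.Ioi (0:ℝ),
            (Real.exp (-(a * (x + y ^ 2 / x) / 2)) : ℂ) * (x : ℂ) ^ (u - 1))
          * (y : ℂ) ^ (s - u - 1) := by
      rw [← MeasureTheory.integral_mul_const]
    rw [hR, ← hpow]
    push_cast
    ring
  -- Fubini
  have hmeas : AEStronglyMeasurable (Function.uncurry F)
      ((volume.restrict (Set.Ioi 0)).prod (volume.restrict (Set.Ioi 0))) := by
    rw [Measure.prod_restrict]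
    refine ContinuousOn.aestronglyMeasurable ?_ (measurableSet_Ioi.prod measurableSet_Ioi)
    have h1 : ContinuousOn (fun p : ℝ × ℝ => (Real.exp (-(a * (p.1 + p.2 ^ 2 / p.1) / 2)) : ℂ))
        (Set.Ioi 0 ×ˢ Set.Ioi 0) := by
      refine Complex.continuous_ofReal.comp_continuousOn
        (Real.continuous_exp.comp_continuousOn ?_)
      have hdiv : ContinuousOn (fun p : ℝ × ℝ => p.2 ^ 2 / p.1) (Set.Ioi 0 ×ˢ Set.Ioi 0) :=
        ((continuous_snd.pow 2).continuousOn).div continuous_fst.continuousOn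
          (fun p hp => ne_of_gt (hp.1 : (0:ℝ) < p.1))
      exact (((continuousOn_const.mul (continuous_fst.continuousOn.add hdiv)).div_const 2)).neg
    have h2 : ContinuousOn (fun p : ℝ × ℝ => ((p.1 : ℝ) : ℂ) ^ (u - 1))
        (Set.Ioi 0 ×ˢ Set.Ioi 0) := by
      refine continuousOn_of_forall_continuousAt (fun p hp => ?_)
      exact (Complex.continuousAt_ofReal_cpow_const p.1 _
        (Or.inr (ne_of_gt (hp.1 : (0:ℝ) < p.1)))).comp continuous_fst.continuousAt
    have h3 : ContinuousOn (fun p : ℝ × ℝ => ((p.2 : ℝ) : ℂ) ^ (s - u - 1))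
        (Set.Ioi 0 ×ˢ Set.Ioi 0) := by
      refine continuousOn_of_forall_continuousAt (fun p hp => ?_)
      exact (Complex.continuousAt_ofReal_cpow_const p.2 _
        (Or.inr (ne_of_gt (hp.2 : (0:ℝ) < p.2)))).comp continuous_snd.continuousAt
    exact ((h1.mul h2).mul h3)
  have hint : Integrable (Function.uncurry F)
      ((volume.restrict (Set.Ioi 0)).prod (volume.restrict (Set.Ioi 0))) := by
    rw [integrable_prod_iff hmeas]
    constructor
    · filter_upwards [ae_restrict_mem measurableSet_Ioi] with x hx
      have hx : (0:ℝ) < x := hx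
      have : (fun y : ℝ => Function.uncurry F (x, y)) = fun y : ℝ => F x y := rfl
      rw [this, hsplit x hx]
      exact (int_gauss (by positivity) hs1).const_mul _
    · have hp : 0 < (s.re + u.re) / 2 := by linarith
      refine ((int_exp_rpow (by positivity : (0:ℝ) < a / 2) hp).const_mul
        ((1/2) * (2 / a) ^ ((s.re - u.re) / 2) * Real.Gamma ((s.re - u.re) / 2))).congr ?_
      filter_upwards [ae_restrict_mem measurableSet_Ioi] with x hx
      have hx : (0:ℝ) < x := hx
      simp only [Function.uncurry_apply_pair]
      have hnormint : (∫ y in Set.Ioi (0:ℝ), ‖F x y‖)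
          = (Real.exp (-(a * x / 2)) * x ^ (u.re - 1)) *
            ∫ y in Set.Ioi (0:ℝ), Real.exp (-(a / (2 * x) * y ^ 2)) * y ^ ((s.re - u.re) - 1) := by
        rw [← MeasureTheory.integral_const_mul]
        refine setIntegral_congr_fun measurableSet_Ioi (fun y hy => ?_)
        have hy : (0:ℝ) < y := hy
        rw [hF]
        simp only []
        rw [norm_mul, norm_mul, Complex.norm_real, Real.norm_eq_abs,
          abs_of_pos (Real.exp_pos _),
          Complex.norm_cpow_eq_rpow_re_of_pos hx, Complex.norm_cpow_eq_rpow_re_of_pos hy]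
        simp only [Complex.sub_re, Complex.one_re]
        rw [show -(a * (x + y ^ 2 / x) / 2) = -(a * x / 2) + -(a / (2 * x) * y ^ 2) by
          field_simp; ring, Real.exp_add]
        ring
      have hgauss := gauss_rpow (by positivity : (0:ℝ) < a / (2 * x))
        (p := s.re - u.re) (by linarith)
      rw [hnormint, hgauss]
      rw [show (1 / (a / (2 * x))) = (2 / a) * x by field_simp,
        Real.mul_rpow (by positivity) hx.le]
      rw [show Real.exp (-(a * x / 2)) = Real.exp (-(a / 2 * x)) by ring_nf,
        show x ^ (u.re - 1) = x ^ ((u.re - 1)) from rfl]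
      rw [show (s.re - u.re) / 2 = ((s.re + u.re) / 2 - 1) - (u.re - 1) by ring]
      rw [Real.rpow_sub hx ((s.re + u.re) / 2 - 1) (u.re - 1)]
      field_simp [Real.rpow_natCast]
  have hswap : (∫ y in Set.Ioi (0:ℝ), ∫ x in Set.Ioi (0:ℝ), F x y)
      = ∫ x in Set.Ioi (0:ℝ), ∫ y in Set.Ioi (0:ℝ), F x y :=
    (MeasureTheory.integral_integral_swap hint).symm
  -- Step 4 : evaluate the inner y-integral
  have harga : Complex.arg (a : ℂ) ≠ Real.pi := by
    rw [Complex.arg_ofReal_of_nonneg ha.le]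
    exact Ne.symm Real.pi_ne_zero
  have ha0 : (a:ℂ) ≠ 0 := by exact_mod_cast ha.ne'
  have step4 : ∀ x ∈ Set.Ioi (0:ℝ), (∫ y in Set.Ioi (0:ℝ), F x y)
      = ((1/2 : ℂ) * ((2 / a : ℝ) : ℂ) ^ ((s - u)/2) * Complex.Gamma ((s - u)/2)) *
        ((Real.exp (-(a / 2 * x)) : ℂ) * (x : ℂ) ^ ((s + u)/2 - 1)) := by
    intro x hx
    have hx : (0:ℝ) < x := hx
    have hx0 : (x:ℂ) ≠ 0 := by exact_mod_cast hx.ne'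
    rw [hsplit x hx, MeasureTheory.integral_const_mul,
      gauss_cpow (by positivity : (0:ℝ) < a / (2 * x)) hs1]
    rw [show (1 / ((a / (2 * x) : ℝ) : ℂ)) = (((2 / a) * x : ℝ) : ℂ) by
      push_cast; field_simp]
    rw [Complex.ofReal_mul, Complex.mul_cpow_ofReal_nonneg (by positivity) hx.le]
    rw [show Real.exp (-(a / 2 * x)) = Real.exp (-(a * x / 2)) by ring_nf]
    have hxx : (x:ℂ)^(u-1) * (x:ℂ)^((s-u)/2) = (x:ℂ)^((s+u)/2-1) := by
      rw [← Complex.cpow_add _ _ hx0]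
      congr 1
      ring
    linear_combination ((1:ℂ)/2) * ((2/a : ℝ):ℂ)^((s-u)/2) * Complex.Gamma ((s-u)/2)
      * (Real.exp (-(a*x/2)) : ℂ) * hxx
  -- assemble
  calc ∫ y in Set.Ioi (0:ℝ), KBessel u (a * y) * (y : ℂ) ^ (s - 1)
      = ∫ y in Set.Ioi (0:ℝ), (1/2 : ℂ) * ∫ x in Set.Ioi (0:ℝ), F x y :=
        setIntegral_congr_fun measurableSet_Ioi step1
    _ = (1/2 : ℂ) * ∫ y in Set.Ioi (0:ℝ), ∫ x in Set.Ioi (0:ℝ), F x y :=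
        MeasureTheory.integral_const_mul _ _
    _ = (1/2 : ℂ) * ∫ x in Set.Ioi (0:ℝ), ∫ y in Set.Ioi (0:ℝ), F x y := by rw [hswap]
    _ = (1/2 : ℂ) * (((1/2 : ℂ) * ((2 / a : ℝ) : ℂ) ^ ((s - u)/2) * Complex.Gamma ((s - u)/2)) *
          ∫ x in Set.Ioi (0:ℝ), (Real.exp (-(a / 2 * x)) : ℂ) * (x : ℂ) ^ ((s + u)/2 - 1)) := by
        rw [setIntegral_congr_fun measurableSet_Ioi step4, MeasureTheory.integral_const_mul]
    _ = 2 ^ (s - 2) * (a : ℂ) ^ (-s) * Complex.Gamma ((s + u) / 2)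
          * Complex.Gamma ((s - u) / 2) := by
        have hgam : (∫ x in Set.Ioi (0:ℝ), (Real.exp (-(a / 2 * x)) : ℂ)
              * (x : ℂ) ^ ((s + u)/2 - 1))
            = (1 / ((a/2 : ℝ) : ℂ)) ^ ((s + u)/2) * Complex.Gamma ((s + u)/2) := by
          rw [← Complex.integral_cpow_mul_exp_neg_mul_Ioi (half_re hs2)
            (by positivity : (0:ℝ) < a / 2)]
          refine setIntegral_congr_fun measurableSet_Ioi (fun x hx => ?_)
          push_cast
          ring
        rw [hgam]
        rw [show (1 / ((a/2 : ℝ) : ℂ)) = ((2 / a : ℝ) : ℂ) by push_cast; field_simp]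
        have hne : ((2 / a : ℝ) : ℂ) ≠ 0 := Complex.ofReal_ne_zero.mpr (by positivity)
        have hmulpow : ((2/a:ℝ):ℂ)^((s-u)/2) * ((2/a:ℝ):ℂ)^((s+u)/2) = ((2/a:ℝ):ℂ)^s := by
          rw [← Complex.cpow_add _ _ hne]
          congr 1
          ring
        have h2s : ((2/a:ℝ):ℂ)^s = (2:ℂ)^s * (a:ℂ)^(-s) := by
          rw [show ((2/a:ℝ):ℂ) = ((2:ℝ):ℂ) * ((a⁻¹:ℝ):ℂ) by push_cast; field_simp,
            Complex.mul_cpow_ofReal_nonneg (by norm_num) (by positivity),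
            show ((a⁻¹:ℝ):ℂ) = ((a:ℂ))⁻¹ by push_cast; ring,
            Complex.inv_cpow _ _ harga, ← Complex.cpow_neg,
            show ((2:ℝ):ℂ) = (2:ℂ) by norm_num]
        have h4 : (2:ℂ)^(2:ℂ) = 4 := by
          rw [show (2:ℂ) = ((2:ℕ):ℂ) from by norm_num, Complex.cpow_natCast]
          norm_num
        have h2s2 : (2:ℂ)^(s-2) = (2:ℂ)^s / 4 := by
          rw [Complex.cpow_sub _ _ (two_ne_zero), h4]
        rw [h2s2]
        have hP : ((2/a:ℝ):ℂ)^((s-u)/2) * ((2/a:ℝ):ℂ)^((s+u)/2)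
            = (2:ℂ)^s * (a:ℂ)^(-s) := hmulpow.trans h2s
        linear_combination ((1:ℂ)/4) * Complex.Gamma ((s+u)/2) * Complex.Gamma ((s-u)/2) * hP
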